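/- arXiv:1802.05235 — 3 statements merged into one kernel-verified Lean document; each statement's English description precedes it below -/
import Mathlib

section
/- The function ρ_ε^c defined by ρ_ε^c(x) = x²/(x² + ε²) for |x| < ε/√3 and ρ_ε^c(x) = (1/8)((3√3/ε)|x| − 1) for |x| ≥ ε/√3 is convex on ℝ. -/
/-- The convexified Geman–McClure function, equal to `x²/(x² + ε²)` for
`|x| < ε/√3` and `(1/8)((3√3/ε)|x| − 1)` for `|x| ≥ ε/√3`, is convex on `ℝ`. -/
theorem stmt_8 (ε : ℝ) (hε : 0 < ε)
    (ρc : ℝ → ℝ)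
    (hρc : ∀ x, ρc x = if |x| < ε / Real.sqrt 3 then x ^ 2 / (x ^ 2 + ε ^ 2)
      else (1 / 8) * ((3 * Real.sqrt 3 / ε) * |x| - 1)) :
    ConvexOn ℝ Set.univ ρc := by
  have hs0 : (0:ℝ) < Real.sqrt 3 := Real.sqrt_pos.mpr (by norm_num)
  have hs2 : (Real.sqrt 3) ^ 2 = 3 := Real.sq_sqrt (by norm_num)
  set s := Real.sqrt 3 with hs_def
  set a := ε / s with ha_def
  have ha0 : 0 < a := div_pos hε hs0
  have ha2 : a ^ 2 = ε ^ 2 / 3 := by rw [ha_def, div_pow, hs2]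
  set c := 3 * s / (8 * ε) with hc_def
  have hc0 : 0 < c := by positivity
  set m : ℝ → ℝ := fun x => 2 * x * ε ^ 2 / (x ^ 2 + ε ^ 2) ^ 2 with hm_def
  have hεne : ε ≠ 0 := ne_of_gt hε
  have hsne : s ≠ 0 := ne_of_gt hs0
  -- ρc agrees with the rational piece on [-a, a]
  have key_q : ∀ x, |x| ≤ a → ρc x = x ^ 2 / (x ^ 2 + ε ^ 2) := by
    intro x hx
    rcases lt_or_eq_of_le hx with h | h
    · rw [hρc, if_pos h]
    · rw [hρc, if_neg (by rw [h]; exact lt_irrefl _)]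
      have hx2 : x ^ 2 = a ^ 2 := by rw [← sq_abs, h]
      rw [h, hx2, ha2, ha_def]
      field_simp
      all_goals nlinarith [hs2, hε, hs0]
  have key_L : ∀ x, a ≤ x → ρc x = (1/8) * ((3 * s / ε) * x - 1) := by
    intro x hx
    rw [hρc, if_neg (by rw [abs_of_pos (lt_of_lt_of_le ha0 hx)]; exact not_lt.mpr hx),
      abs_of_pos (lt_of_lt_of_le ha0 hx)]
  have key_Ln : ∀ x, x ≤ -a → ρc x = (1/8) * ((3 * s / ε) * (-x) - 1) := by
    intro x hx
    have hx0 : x < 0 := lt_of_le_of_lt hx (by linarith)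
    rw [hρc, if_neg (by rw [abs_of_neg hx0]; linarith), abs_of_neg hx0]
  -- derivatives of the pieces
  have hq : ∀ x : ℝ, HasDerivAt (fun x => x ^ 2 / (x ^ 2 + ε ^ 2)) (m x) x := by
    intro x
    have h1 : HasDerivAt (fun x : ℝ => x ^ 2) (2 * x) x := by
      simpa using hasDerivAt_pow 2 x
    have h2 : HasDerivAt (fun x : ℝ => x ^ 2 + ε ^ 2) (2 * x) x := h1.add_const _
    have hne : x ^ 2 + ε ^ 2 ≠ 0 := by positivity
    have := h1.div h2 hne
    refine this.congr_deriv ?_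
    rw [hm_def]
    field_simp
    all_goals ring
  have hL : ∀ x : ℝ, HasDerivAt (fun x : ℝ => (1/8) * ((3 * s / ε) * x - 1)) c x := by
    intro x
    have h1 : HasDerivAt (fun x : ℝ => (3 * s / ε) * x) (3 * s / ε) x := by
      simpa using (hasDerivAt_id x).const_mul (3 * s / ε)
    have := ((h1.sub_const 1).const_mul (1/8 : ℝ))
    refine this.congr_deriv ?_
    rw [hc_def]
    field_simp
    all_goals ring
  have hLn : ∀ x : ℝ, HasDerivAt (fun x : ℝ => (1/8) * ((3 * s / ε) * (-x) - 1)) (-c) x := by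
    intro x
    have h1 : HasDerivAt (fun x : ℝ => (3 * s / ε) * (-x)) (-(3 * s / ε)) x := by
      simpa using ((hasDerivAt_id x).neg.const_mul (3 * s / ε))
    have := ((h1.sub_const 1).const_mul (1/8 : ℝ))
    refine this.congr_deriv ?_
    rw [hc_def]
    field_simp
    all_goals ring
  have hma : m a = c := by
    rw [hm_def, hc_def]
    simp only
    rw [ha_def]
    field_simp
    linear_combination (-(3*s^2 - 1)) * hs2
  have hmna : m (-a) = -c := by
    rw [hm_def] at hma ⊢
    simp only at hma ⊢
    rw [show ((-a) ^ 2 : ℝ) = a ^ 2 by ring, ← hma]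
    ring
  set d : ℝ → ℝ := fun x => if x < -a then -c else if x < a then m x else c with hd_def
  -- HasDerivAt ρc (d x) x everywhere
  have hderiv : ∀ x, HasDerivAt ρc (d x) x := by
    intro x
    rcases lt_trichotomy x (-a) with hx | hx | hx
    · have heq : ρc =ᶠ[nhds x] (fun x => (1/8) * ((3 * s / ε) * (-x) - 1)) :=
        Filter.eventuallyEq_of_mem (Iio_mem_nhds hx) (fun y hy => key_Ln y (le_of_lt hy))
      have := (hLn x).congr_of_eventuallyEq heq
      simpa [hd_def, if_pos hx] using this
    · -- x = -a : glue left linear and middle rational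
      subst hx
      have h1 : HasDerivWithinAt ρc (-c) (Set.Iic (-a)) (-a) :=
        ((hLn (-a)).hasDerivWithinAt).congr (fun y hy => key_Ln y hy)
          (key_Ln (-a) le_rfl)
      have h2 : HasDerivWithinAt ρc (-c) (Set.Ico (-a) a) (-a) := by
        have := ((hq (-a)).hasDerivWithinAt (s := Set.Ico (-a) a)).congr
          (fun y hy => key_q y (abs_le.mpr ⟨hy.1, le_of_lt hy.2⟩))
          (key_q (-a) (by rw [abs_neg, abs_of_pos ha0]))
        rwa [hmna] at this
      have h3 := h1.union h2
      have hmem : Set.Iic (-a) ∪ Set.Ico (-a) a ∈ nhds (-a) := by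
        apply Filter.mem_of_superset (Iio_mem_nhds (show -a < a by linarith))
        intro y hy
        rcases le_or_gt y (-a) with h | h
        · exact Or.inl h
        · exact Or.inr ⟨le_of_lt h, hy⟩
      have h4 := h3.hasDerivAt hmem
      have hd : d (-a) = -c := by
        rw [hd_def]
        simp only [if_neg (lt_irrefl (-a)), if_pos (show -a < a by linarith)]
        exact hmna
      rw [hd]
      exact h4
    · rcases lt_trichotomy x a with hx' | hx' | hx'
      · have heq : ρc =ᶠ[nhds x] (fun x => x ^ 2 / (x ^ 2 + ε ^ 2)) :=
          Filter.eventuallyEq_of_mem (Ioo_mem_nhds hx hx')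
            (fun y hy => key_q y (abs_le.mpr ⟨le_of_lt hy.1, le_of_lt hy.2⟩))
        have := (hq x).congr_of_eventuallyEq heq
        have hd : d x = m x := by
          rw [hd_def]
          simp only [if_neg (not_lt.mpr (le_of_lt hx)), if_pos hx']
        rw [hd]
        exact this
      · -- x = a : glue middle rational and right linear
        subst hx'
        have h1 : HasDerivWithinAt ρc c (Set.Ioc (-a) a) a := by
          have := ((hq a).hasDerivWithinAt (s := Set.Ioc (-a) a)).congr
            (fun y hy => key_q y (abs_le.mpr ⟨le_of_lt hy.1, hy.2⟩))
            (key_q a (by rw [abs_of_pos ha0]))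
          rwa [hma] at this
        have h2 : HasDerivWithinAt ρc c (Set.Ici a) a :=
          ((hL a).hasDerivWithinAt).congr (fun y hy => key_L y hy) (key_L a le_rfl)
        have h3 := h1.union h2
        have hmem : Set.Ioc (-a) a ∪ Set.Ici a ∈ nhds a := by
          apply Filter.mem_of_superset (Ioi_mem_nhds (show -a < a by linarith))
          intro y hy
          rcases le_or_gt y a with h | h
          · exact Or.inl ⟨hy, h⟩
          · exact Or.inr (le_of_lt h)
        have h4 := h3.hasDerivAt hmem
        have hd : d a = c := by
          rw [hd_def]
          simp only [if_neg (not_lt.mpr (le_of_lt (show -a < a by linarith))),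
            if_neg (lt_irrefl a)]
        rw [hd]
        exact h4
      · have heq : ρc =ᶠ[nhds x] (fun x => (1/8) * ((3 * s / ε) * x - 1)) :=
          Filter.eventuallyEq_of_mem (Ioi_mem_nhds hx') (fun y hy => key_L y (le_of_lt hy))
        have := (hL x).congr_of_eventuallyEq heq
        have hd : d x = c := by
          rw [hd_def]
          simp only [if_neg (not_lt.mpr (le_of_lt (show -a < x by linarith))),
            if_neg (not_lt.mpr (le_of_lt hx'))]
        rw [hd]
        exact this
  -- monotonicity of m on [-a, a]
  have hmono_m : ∀ x y : ℝ, -a ≤ x → x ≤ y → y ≤ a → m x ≤ m y := by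
    intro x y hx hxy hy
    have hx2 : x ^ 2 ≤ ε ^ 2 / 3 := by
      have := sq_le_sq' hx (le_trans hxy hy)
      rwa [ha2] at this
    have hy2 : y ^ 2 ≤ ε ^ 2 / 3 := by
      have := sq_le_sq' (le_trans hx hxy) hy
      rwa [ha2] at this
    rw [hm_def]
    simp only
    rw [div_le_div_iff₀ (by positivity) (by positivity)]
    have hbr : 0 ≤ ε^4 - 2*x*y*ε^2 - x*y*(x^2 + x*y + y^2) := by
      nlinarith [sq_nonneg (x+y), sq_nonneg (x-y), sq_nonneg (x*y), sq_nonneg (ε^2/3 - x*y),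
        mul_nonneg (sq_nonneg x) (sq_nonneg y), hx2, hy2, sq_nonneg ε]
    have hkey := mul_nonneg (mul_nonneg (sub_nonneg.mpr hxy) hbr)
      (le_of_lt (show (0:ℝ) < 2 * ε^2 by positivity))
    nlinarith [hkey]
  have hd_le : ∀ x, d x ≤ c := by
    intro x
    rw [hd_def]
    simp only
    split_ifs with h1 h2
    · linarith
    · rw [← hma]; exact hmono_m x a (not_lt.mp h1) (le_of_lt h2) le_rfl
    · exact le_rfl
  have hd_ge : ∀ x, -c ≤ d x := by
    intro x
    rw [hd_def]
    simp only
    split_ifs with h1 h2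
    · exact le_rfl
    · rw [← hmna]; exact hmono_m (-a) x le_rfl (not_lt.mp h1) (le_of_lt h2)
    · linarith
  have hd_mono : Monotone d := by
    intro x y hxy
    by_cases hy1 : y < -a
    · have hx1 : x < -a := lt_of_le_of_lt hxy hy1
      rw [hd_def]; simp only [if_pos hx1, if_pos hy1]; exact le_rfl
    · by_cases hy2 : y < a
      · have hx2 : x < a := lt_of_le_of_lt hxy hy2
        have hdy : d y = m y := by
          rw [hd_def]; simp only [if_neg hy1, if_pos hy2]
        rw [hdy]
        by_cases hx1 : x < -a
        · have hdx : d x = -c := by rw [hd_def]; simp only [if_pos hx1]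
          rw [hdx, ← hmna]
          exact hmono_m (-a) y le_rfl (not_lt.mp hy1) (le_of_lt hy2)
        · have hdx : d x = m x := by rw [hd_def]; simp only [if_neg hx1, if_pos hx2]
          rw [hdx]
          exact hmono_m x y (not_lt.mp hx1) hxy (le_of_lt hy2)
      · have hdy : d y = c := by rw [hd_def]; simp only [if_neg hy1, if_neg hy2]
        rw [hdy]
        exact hd_le x
  -- conclude via the derivative criterion
  have hdeq : deriv ρc = d := funext fun x => (hderiv x).deriv
  apply MonotoneOn.convexOn_of_deriv convex_univ
  · intro x _
    exact (hderiv x).differentiableAt.continuousAt.continuousWithinAt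
  · rw [interior_univ]
    intro x _
    exact (hderiv x).differentiableAt.differentiableWithinAt
  · rw [interior_univ, hdeq]
    exact hd_mono.monotoneOn _
end

section
/- Let Q and C be symmetric matrices such that every nonzero v with v^T C v = 0 satisfies v^T Q v > 0, and suppose the set {x : c(x) = 0} is nonempty, where c(x) = x^T C x + 2 g^T x + γ is a quadratic with Hessian 2C. Then the problem min{ q(x) : c(x) = 0 } with q a quadratic with Hessian 2Q attains a global minimizer. -/
open Matrix

lemma contB (n : ℕ) (A : Matrix (Fin n) (Fin n) ℝ) :
    Continuous fun x : Fin n → ℝ => x ⬝ᵥ A.mulVec x := by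
  simp only [dotProduct, Matrix.mulVec]
  fun_prop

lemma contDot (n : ℕ) (h : Fin n → ℝ) :
    Continuous fun x : Fin n → ℝ => h ⬝ᵥ x := by
  simp only [dotProduct]
  fun_prop

lemma dotBound (n : ℕ) (h x : Fin n → ℝ) : |h ⬝ᵥ x| ≤ (∑ i, |h i|) * ‖x‖ := by
  calc |∑ i, h i * x i| ≤ ∑ i, |h i * x i| := Finset.abs_sum_le_sum_abs _ _
    _ ≤ ∑ i, |h i| * ‖x‖ := by
        refine Finset.sum_le_sum fun i _ => ?_
        rw [abs_mul]
        exact mul_le_mul_of_nonneg_left (by simpa [Real.norm_eq_abs] using norm_le_pi_norm x i) (abs_nonneg _)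
    _ = (∑ i, |h i|) * ‖x‖ := (Finset.sum_mul _ _ _).symm

lemma scaleB (n : ℕ) (A : Matrix (Fin n) (Fin n) ℝ) (a : ℝ) (x : Fin n → ℝ) :
    (a • x) ⬝ᵥ A.mulVec (a • x) = a ^ 2 * (x ⬝ᵥ A.mulVec x) := by
  rw [Matrix.mulVec_smul, smul_dotProduct, dotProduct_smul]
  rw [smul_eq_mul, smul_eq_mul]
  ring

/-- Moré's existence theorem for the GTRS: if `q` and `c` are quadratics with
(half-)Hessians `Q` and `C`, the feasible set `{x : c(x) = 0}` is nonempty, and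
every nonzero `v` with `vᵀ C v = 0` satisfies `vᵀ Q v > 0`, then
`min {q(x) : c(x) = 0}` has a global minimizer. -/
theorem stmt_11 (n : ℕ)
    (Q C : Matrix (Fin n) (Fin n) ℝ) (hQ : Q.IsSymm) (hC : C.IsSymm)
    (g h : Fin n → ℝ) (γq γc : ℝ)
    (q c : (Fin n → ℝ) → ℝ)
    (hq : ∀ x, q x = x ⬝ᵥ Q.mulVec x + 2 * (g ⬝ᵥ x) + γq)
    (hc : ∀ x, c x = x ⬝ᵥ C.mulVec x + 2 * (h ⬝ᵥ x) + γc)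
    (hfeas : ∃ x, c x = 0)
    (hcond : ∀ v : Fin n → ℝ, v ≠ 0 → v ⬝ᵥ C.mulVec v = 0 → 0 < v ⬝ᵥ Q.mulVec v) :
    ∃ xstar, c xstar = 0 ∧ ∀ x, c x = 0 → q xstar ≤ q x := by
  obtain ⟨x₀, hx₀⟩ := hfeas
  -- continuity of q and c
  have hqc : Continuous q := by
    have : Continuous fun x : Fin n → ℝ => x ⬝ᵥ Q.mulVec x + 2 * (g ⬝ᵥ x) + γq := by
      exact (((contB n Q).add (continuous_const.mul (contDot n g))).add continuous_const)
    simpa [funext hq] using this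
  have hcc : Continuous c := by
    have : Continuous fun x : Fin n → ℝ => x ⬝ᵥ C.mulVec x + 2 * (h ⬝ᵥ x) + γc := by
      exact (((contB n C).add (continuous_const.mul (contDot n h))).add continuous_const)
    simpa [funext hc] using this
  set S : Set (Fin n → ℝ) := {x | c x = 0 ∧ q x ≤ q x₀} with hS
  have hx₀S : x₀ ∈ S := ⟨hx₀, le_refl _⟩
  have hclosed : IsClosed S := by
    have h1 : IsClosed {x | c x = 0} := isClosed_eq hcc continuous_const
    have h2 : IsClosed {x | q x ≤ q x₀} := isClosed_le hqc continuous_const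
    exact h1.inter h2
  -- boundedness
  have hbdd : Bornology.IsBounded S := by
    by_contra hb
    rw [isBounded_iff_forall_norm_le] at hb
    push_neg at hb
    choose u huS hugt using fun k : ℕ => hb (k : ℝ)
    have hupos : ∀ k, 0 < ‖u k‖ := fun k => lt_of_le_of_lt (Nat.cast_nonneg k) (hugt k)
    set v : ℕ → (Fin n → ℝ) := fun k => (‖u k‖)⁻¹ • u k with hv
    have hvnorm : ∀ k, ‖v k‖ = 1 := by
      intro k
      rw [hv]
      simp [norm_smul, abs_of_pos (inv_pos.mpr (hupos k)), inv_mul_cancel₀ (hupos k).ne']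
    have hvmem : ∀ k, v k ∈ Metric.sphere (0 : Fin n → ℝ) 1 := by
      intro k; simp [Metric.mem_sphere, dist_zero_right, hvnorm k]
    obtain ⟨w, hwmem, φ, hφ, hlim⟩ :=
      (isCompact_sphere (0 : Fin n → ℝ) 1).tendsto_subseq hvmem
    have hwnorm : ‖w‖ = 1 := by simpa [dist_zero_right] using hwmem
    have hwne : w ≠ 0 := fun h0 => by simp [h0] at hwnorm
    set N : ℕ → ℝ := fun k => ‖u (φ k)‖ with hN
    have hNpos : ∀ k, 0 < N k := fun k => hupos _
    have hNtop : Filter.Tendsto N Filter.atTop Filter.atTop := by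
      apply Filter.tendsto_atTop_mono (fun k => ?_) tendsto_natCast_atTop_atTop
      calc (k : ℝ) ≤ (φ k : ℝ) := by exact_mod_cast hφ.le_apply
        _ ≤ N k := (hugt (φ k)).le
    set H : ℝ := ∑ i, |h i| with hH
    set G : ℝ := ∑ i, |g i| with hG
    -- limit of the C-form along the subsequence is 0
    have hvC : Filter.Tendsto (fun k => (v (φ k)) ⬝ᵥ C.mulVec (v (φ k)))
        Filter.atTop (nhds (w ⬝ᵥ C.mulVec w)) :=
      ((contB n C).tendsto w).comp hlim
    have hvQ : Filter.Tendsto (fun k => (v (φ k)) ⬝ᵥ Q.mulVec (v (φ k)))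
        Filter.atTop (nhds (w ⬝ᵥ Q.mulVec w)) :=
      ((contB n Q).tendsto w).comp hlim
    have huC : ∀ k, (u k) ⬝ᵥ C.mulVec (u k) = -(2 * (h ⬝ᵥ u k) + γc) := by
      intro k
      have := (huS k).1
      rw [hc] at this
      linarith
    have hCbound : ∀ k, |(v (φ k)) ⬝ᵥ C.mulVec (v (φ k))| ≤
        2 * H / N k + |γc| / (N k * N k) := by
      intro k
      have hpos := hNpos k
      have hdb := dotBound n h (u (φ k))
      have habs : |(u (φ k)) ⬝ᵥ C.mulVec (u (φ k))| ≤ 2 * H * N k + |γc| := by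
        rw [huC (φ k), abs_neg]
        calc |2 * (h ⬝ᵥ u (φ k)) + γc| ≤ |2 * (h ⬝ᵥ u (φ k))| + |γc| := abs_add_le _ _
          _ ≤ 2 * H * N k + |γc| := by
              rw [abs_mul, abs_two]
              nlinarith [hdb]
      have hscale : (v (φ k)) ⬝ᵥ C.mulVec (v (φ k)) =
          (N k)⁻¹ ^ 2 * ((u (φ k)) ⬝ᵥ C.mulVec (u (φ k))) := scaleB n C _ _
      rw [hscale, abs_mul, abs_pow, abs_inv, abs_of_pos hpos]
      have hinv : (0:ℝ) < (N k)⁻¹ ^ 2 := by positivity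
      calc (N k)⁻¹ ^ 2 * |(u (φ k)) ⬝ᵥ C.mulVec (u (φ k))|
          ≤ (N k)⁻¹ ^ 2 * (2 * H * N k + |γc|) := by nlinarith [habs]
        _ = 2 * H / N k + |γc| / (N k * N k) := by field_simp
    have htend0 : Filter.Tendsto (fun k => 2 * H / N k + |γc| / (N k * N k))
        Filter.atTop (nhds 0) := by
      have h1 : Filter.Tendsto (fun k => 2 * H / N k) Filter.atTop (nhds 0) :=
        Filter.Tendsto.div_atTop tendsto_const_nhds hNtop
      have h2 : Filter.Tendsto (fun k => |γc| / (N k * N k)) Filter.atTop (nhds 0) :=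
        Filter.Tendsto.div_atTop tendsto_const_nhds (hNtop.atTop_mul_atTop₀ hNtop)
      simpa using h1.add h2
    have hCw : w ⬝ᵥ C.mulVec w = 0 :=
      tendsto_nhds_unique hvC
        (squeeze_zero_norm (fun k => by
          simpa [Real.norm_eq_abs] using hCbound k) htend0)
    -- the Q-form limit is ≤ 0
    have huQ : ∀ k, (u k) ⬝ᵥ Q.mulVec (u k) ≤ q x₀ - 2 * (g ⬝ᵥ u k) - γq := by
      intro k
      have := (huS k).2
      rw [hq] at this
      linarith
    have hQle : ∀ k, (v (φ k)) ⬝ᵥ Q.mulVec (v (φ k)) ≤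
        (q x₀ + |γq|) / (N k * N k) + 2 * G / N k := by
      intro k
      have hpos := hNpos k
      have hdb := dotBound n g (u (φ k))
      have habs : (u (φ k)) ⬝ᵥ Q.mulVec (u (φ k)) ≤ q x₀ + 2 * G * N k + |γq| := by
        have h1 := huQ (φ k)
        have h2 : -(g ⬝ᵥ u (φ k)) ≤ G * N k := by
          have := neg_le_abs (g ⬝ᵥ u (φ k))
          linarith
        have h3 : -γq ≤ |γq| := neg_le_abs γq
        linarith
      have hscale : (v (φ k)) ⬝ᵥ Q.mulVec (v (φ k)) =
          (N k)⁻¹ ^ 2 * ((u (φ k)) ⬝ᵥ Q.mulVec (u (φ k))) := scaleB n Q _ _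
      have hinv : (0:ℝ) < (N k)⁻¹ ^ 2 := by positivity
      rw [hscale]
      calc (N k)⁻¹ ^ 2 * ((u (φ k)) ⬝ᵥ Q.mulVec (u (φ k)))
          ≤ (N k)⁻¹ ^ 2 * (q x₀ + 2 * G * N k + |γq|) := by nlinarith [habs]
        _ = (q x₀ + |γq|) / (N k * N k) + 2 * G / N k := by field_simp; ring
    have htendQ0 : Filter.Tendsto (fun k => (q x₀ + |γq|) / (N k * N k) + 2 * G / N k)
        Filter.atTop (nhds 0) := by
      have h1 : Filter.Tendsto (fun k => (q x₀ + |γq|) / (N k * N k)) Filter.atTop (nhds 0) :=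
        Filter.Tendsto.div_atTop tendsto_const_nhds (hNtop.atTop_mul_atTop₀ hNtop)
      have h2 : Filter.Tendsto (fun k => 2 * G / N k) Filter.atTop (nhds 0) :=
        Filter.Tendsto.div_atTop tendsto_const_nhds hNtop
      simpa using h1.add h2
    have hQw : w ⬝ᵥ Q.mulVec w ≤ 0 :=
      le_of_tendsto_of_tendsto' hvQ htendQ0 hQle
    exact absurd (hcond w hwne hCw) (not_lt.mpr hQw)
  have hcompact : IsCompact S :=
    Metric.isCompact_of_isClosed_isBounded hclosed hbdd
  obtain ⟨xstar, hxS, hmin⟩ := hcompact.exists_isMinOn ⟨x₀, hx₀S⟩ hqc.continuousOn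
  refine ⟨xstar, hxS.1, fun x hx => ?_⟩
  rcases le_or_gt (q x₀) (q x) with h1 | h1
  · exact le_trans (hmin hx₀S) h1
  · exact hmin ⟨hx, h1.le⟩
end

section
/- Let q, c : ℝ^n → ℝ be quadratic functions with min_x c(x) < 0 < max_x c(x) and ∇²c ≠ 0. A vector x* is a global minimizer of min{q(x) : c(x) = 0} if and only if c(x*) = 0 and there exists λ* ∈ ℝ with ∇q(x*) + λ*∇c(x*) = 0 and ∇²q(x*) + λ*∇²c(x*) positive semidefinite. -/
open Matrix

section Helpers

lemma dot_symm' {n : ℕ} (M : Matrix (Fin n) (Fin n) ℝ) (hM : M.IsSymm) (u v : Fin n → ℝ) :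
    u ⬝ᵥ M.mulVec v = v ⬝ᵥ M.mulVec u := by
  rw [dotProduct_mulVec, ← Matrix.mulVec_transpose, hM, dotProduct_comm]

lemma expandP' {n : ℕ} (M : Matrix (Fin n) (Fin n) ℝ) (hM : M.IsSymm)
    (g0 : Fin n → ℝ) (γ : ℝ) (x d : Fin n → ℝ) (t : ℝ) :
    (x + t • d) ⬝ᵥ M.mulVec (x + t • d) + 2 * (g0 ⬝ᵥ (x + t • d)) + γ
      = (d ⬝ᵥ M.mulVec d) * t ^ 2 + (2 * (d ⬝ᵥ (M.mulVec x + g0))) * t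
        + (x ⬝ᵥ M.mulVec x + 2 * (g0 ⬝ᵥ x) + γ) := by
  have hsym := dot_symm' M hM x d
  simp only [mulVec_add, mulVec_smul, dotProduct_add, add_dotProduct, dotProduct_smul,
    smul_dotProduct, smul_eq_mul, hsym, dotProduct_comm g0 d]
  ring

lemma exists_quadform_ne_zero' {n : ℕ} (C : Matrix (Fin n) (Fin n) ℝ) (hC : C.IsSymm)
    (hCne : C ≠ 0) : ∃ w : Fin n → ℝ, w ⬝ᵥ C.mulVec w ≠ 0 := by
  by_contra hcon
  push_neg at hcon
  apply hCne
  have hbil : ∀ u v : Fin n → ℝ, u ⬝ᵥ C.mulVec v = 0 := by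
    intro u v
    have h1 := hcon (u + v)
    have h2 := hcon u
    have h3 := hcon v
    have hsym := dot_symm' C hC u v
    simp only [mulVec_add, dotProduct_add, add_dotProduct] at h1
    rw [hsym] at h1
    linarith [h1, h2, h3]
  ext i j
  have := hbil (Pi.single i 1) (Pi.single j 1)
  rw [mulVec_single] at this
  simp only [Pi.single_apply, dotProduct] at this ⊢
  simpa using this

lemma cont_nonneg_of_approx' (P : ℝ → ℝ) (hP : Continuous P)
    (H : ∀ δ : ℝ, 0 < δ → ∃ ε : ℝ, 0 < ε ∧ ε < δ ∧ 0 ≤ P ε) : 0 ≤ P 0 := by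
  by_contra hcon
  push_neg at hcon
  have hopen : IsOpen {x : ℝ | P x < 0} := isOpen_lt hP continuous_const
  obtain ⟨δ, hδpos, hball⟩ := Metric.isOpen_iff.mp hopen 0 hcon
  obtain ⟨ε, hε1, hε2, hε3⟩ := H δ hδpos
  have : P ε < 0 := hball (by simpa [Real.dist_eq, abs_of_pos hε1] using hε2)
  linarith

lemma quad_nonneg_coeffs' (A B : ℝ) (hyp : ∀ t : ℝ, 0 ≤ A * t ^ 2 + B * t) :
    B = 0 ∧ 0 ≤ A := by
  have key : ∀ s : ℝ, 0 < s → |B| * s ≤ A * s ^ 2 := by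
    intro s hs
    have h1 := hyp s
    have h2 := hyp (-s)
    have habs : |B * s| ≤ A * s ^ 2 := by
      rw [abs_le]; constructor <;> nlinarith [h1, h2]
    calc |B| * s = |B * s| := by rw [abs_mul, abs_of_pos hs]
      _ ≤ A * s ^ 2 := habs
  have hA : 0 ≤ A := by
    have := key 1 one_pos
    have hB := abs_nonneg B
    nlinarith [this]
  refine ⟨?_, hA⟩
  rcases eq_or_ne B 0 with hb | hb
  · exact hb
  · exfalso
    have hBpos : 0 < |B| := abs_pos.mpr hb
    have hApos : 0 < A := by
      rcases hA.lt_or_eq with hlt | heq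
      · exact hlt
      · exfalso; have := key 1 one_pos; rw [← heq] at this; simp at this; exact hb this
    have hs : 0 < |B| / (2 * A) := by positivity
    have := key _ hs
    rw [div_pow] at this
    have hAne : A ≠ 0 := ne_of_gt hApos
    field_simp at this
    norm_num at this

lemma quad_root_lemma' (A B E a b e : ℝ) (hA : A ≠ 0) (hE : E < 0) (h1 : 0 < A + B + E)
    (hroot : ∀ r : ℝ, A * r ^ 2 + B * r + E = 0 → 0 ≤ a * r ^ 2 + b * r + e) :
    0 ≤ e * (A + B + E) - (a + b + e) * E := by
  have hdisc : 0 < B ^ 2 - 4 * A * E := by nlinarith [sq_nonneg (2 * E + B)]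
  obtain ⟨s, hs2, hspos⟩ : ∃ s : ℝ, s ^ 2 = B ^ 2 - 4 * A * E ∧ 0 < s :=
    ⟨Real.sqrt _, Real.sq_sqrt hdisc.le, Real.sqrt_pos.mpr hdisc⟩
  set r₁ : ℝ := (-B - s) / (2 * A) with hr1
  set r₂ : ℝ := (-B + s) / (2 * A) with hr2
  clear_value r₁ r₂
  have hA2 : (2 : ℝ) * A ≠ 0 := by simpa using hA
  have hroot1 : A * r₁ ^ 2 + B * r₁ + E = 0 := by
    rw [hr1]; field_simp; nlinarith [hs2]
  have hroot2 : A * r₂ ^ 2 + B * r₂ + E = 0 := by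
    rw [hr2]; field_simp; nlinarith [hs2]
  have hprod : A * (r₁ * r₂) = E := by
    rw [hr1, hr2]; field_simp; nlinarith [hs2]
  have hsum : A * (r₁ + r₂) = -B := by
    rw [hr1, hr2]; field_simp; ring
  have hr12 : r₂ - r₁ = s / A := by rw [hr1, hr2]; field_simp; ring
  have hB : B = -(A * (r₁ + r₂)) := by linarith only [hsum]
  have hE' : E = A * (r₁ * r₂) := hprod.symm
  have hone : A * ((1 - r₁) * (1 - r₂)) = A + B + E := by rw [hB, hE']; ring
  have hf1 := hroot r₁ hroot1
  have hf2 := hroot r₂ hroot2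
  have hid : (e * (A + B + E) - (a + b + e) * E) * (r₂ - r₁)
      = A * r₂ * (1 - r₂) * (a * r₁ ^ 2 + b * r₁ + e)
        - A * r₁ * (1 - r₁) * (a * r₂ ^ 2 + b * r₂ + e) := by
    rw [hB, hE']; ring
  clear hroot hroot1 hroot2 hsum hdisc hs2 hr1 hr2 hA2 hB hE'
  rcases lt_or_gt_of_ne hA with hAneg | hApos
  · have horder : r₂ < r₁ := by
      have hd : s / A < 0 := div_neg_of_pos_of_neg hspos hAneg
      rw [← hr12] at hd; linarith only [hd]
    have hpp : 0 < r₁ * r₂ := by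
      by_contra hcon; push_neg at hcon
      have t := mul_nonneg (neg_nonneg.mpr hAneg.le) (neg_nonneg.mpr hcon)
      rw [neg_mul_neg, hprod] at t
      linarith only [t, hE]
    have hqq : (1 - r₁) * (1 - r₂) < 0 := by
      by_contra hcon; push_neg at hcon
      have t := mul_nonneg (neg_nonneg.mpr hAneg.le) hcon
      rw [neg_mul, neg_nonneg, hone] at t
      linarith only [t, h1]
    have h1r1 : 1 < r₁ := by
      by_contra hcon; push_neg at hcon
      have t : (0:ℝ) ≤ (1 - r₁) * (1 - r₂) :=
        mul_nonneg (by linarith only [hcon]) (by linarith only [hcon, horder])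
      linarith only [t, hqq]
    have hr2pos : 0 < r₂ := by
      by_contra hcon; push_neg at hcon
      have t : (0:ℝ) ≤ r₁ * (-r₂) :=
        mul_nonneg (by linarith only [h1r1]) (by linarith only [hcon])
      rw [mul_neg, neg_nonneg] at t
      linarith only [t, hpp]
    have hr2lt1 : r₂ < 1 := by
      by_contra hcon; push_neg at hcon
      have t : (0:ℝ) ≤ (-(1 - r₁)) * (-(1 - r₂)) :=
        mul_nonneg (by linarith only [h1r1]) (by linarith only [hcon])
      rw [neg_mul_neg] at t
      linarith only [t, hqq]
    have c1 : 0 ≤ A * r₁ * (1 - r₁) :=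
      (mul_pos_of_neg_of_neg (mul_neg_of_neg_of_pos hAneg (by linarith only [h1r1]))
        (by linarith only [h1r1])).le
    have c2 : A * r₂ * (1 - r₂) ≤ 0 :=
      (mul_neg_of_neg_of_pos (mul_neg_of_neg_of_pos hAneg hr2pos)
        (by linarith only [hr2lt1])).le
    have hRHS : (e * (A + B + E) - (a + b + e) * E) * (r₂ - r₁) ≤ 0 := by
      rw [hid]
      have t1 := mul_nonneg (neg_nonneg.mpr c2) hf1
      have t2 := mul_nonneg c1 hf2
      ring_nf at t1 t2 ⊢
      linarith only [t1, t2]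
    by_contra hcon
    push_neg at hcon
    have t := mul_pos_of_neg_of_neg hcon (by linarith only [horder] : r₂ - r₁ < 0)
    linarith only [t, hRHS]
  · have horder : r₁ < r₂ := by
      have hd : 0 < s / A := div_pos hspos hApos
      rw [← hr12] at hd; linarith only [hd]
    have hpp : r₁ * r₂ < 0 := by
      by_contra hcon; push_neg at hcon
      have t := mul_nonneg hApos.le hcon
      rw [hprod] at t
      linarith only [t, hE]
    have hqq : 0 < (1 - r₁) * (1 - r₂) := by
      by_contra hcon; push_neg at hcon
      have t := mul_nonneg hApos.le (neg_nonneg.mpr hcon)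
      rw [mul_neg, neg_nonneg, hone] at t
      linarith only [t, h1]
    have hr1neg : r₁ < 0 := by
      by_contra hcon; push_neg at hcon
      have t : (0:ℝ) ≤ r₁ * r₂ :=
        mul_nonneg hcon (by linarith only [hcon, horder])
      linarith only [t, hpp]
    have hr2pos : 0 < r₂ := by
      by_contra hcon; push_neg at hcon
      have t : (0:ℝ) ≤ (-r₁) * (-r₂) :=
        mul_nonneg (by linarith only [horder, hcon]) (by linarith only [hcon])
      rw [neg_mul_neg] at t
      linarith only [t, hpp]
    have hr2lt1 : r₂ < 1 := by
      by_contra hcon; push_neg at hcon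
      have t : (0:ℝ) ≤ (1 - r₁) * (-(1 - r₂)) :=
        mul_nonneg (by linarith only [hr1neg]) (by linarith only [hcon])
      rw [mul_neg, neg_nonneg] at t
      linarith only [t, hqq]
    have c1 : 0 ≤ A * r₂ * (1 - r₂) :=
      (mul_pos (mul_pos hApos hr2pos) (by linarith only [hr2lt1])).le
    have c2 : A * r₁ * (1 - r₁) ≤ 0 :=
      (mul_neg_of_neg_of_pos (mul_neg_of_pos_of_neg hApos hr1neg)
        (by linarith only [hr1neg])).le
    have hRHS : 0 ≤ (e * (A + B + E) - (a + b + e) * E) * (r₂ - r₁) := by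
      rw [hid]
      have t1 := mul_nonneg c1 hf1
      have t2 := mul_nonneg (neg_nonneg.mpr c2) hf2
      ring_nf at t1 t2 ⊢
      linarith only [t1, t2]
    by_contra hcon
    push_neg at hcon
    have t := mul_neg_of_neg_of_pos hcon (by linarith only [horder] : 0 < r₂ - r₁)
    linarith only [t, hRHS]

end Helpers

/-- Moré's characterization of global minimizers of the GTRS: for quadratics
`q, c` with `min c < 0 < max c` and `∇²c ≠ 0`, `x*` is a global minimizer of
`min {q(x) : c(x) = 0}` iff `c(x*) = 0` and there is `λ*` with
`∇q(x*) + λ* ∇c(x*) = 0` and `∇²q + λ* ∇²c` positive semidefinite. -/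
theorem stmt_12 (n : ℕ)
    (Q C : Matrix (Fin n) (Fin n) ℝ) (hQ : Q.IsSymm) (hC : C.IsSymm)
    (g h : Fin n → ℝ) (γq γc : ℝ)
    (q c : (Fin n → ℝ) → ℝ)
    (hq : ∀ x, q x = x ⬝ᵥ Q.mulVec x + 2 * (g ⬝ᵥ x) + γq)
    (hc : ∀ x, c x = x ⬝ᵥ C.mulVec x + 2 * (h ⬝ᵥ x) + γc)
    (hneg : ∃ x, c x < 0) (hpos : ∃ x, 0 < c x) (hCne : C ≠ 0)
    (xstar : Fin n → ℝ) :
    (c xstar = 0 ∧ ∀ x, c x = 0 → q xstar ≤ q x) ↔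
    (c xstar = 0 ∧ ∃ lam : ℝ,
      Q.mulVec xstar + g + lam • (C.mulVec xstar + h) = 0 ∧
      (Q + lam • C).PosSemidef) := by
  have expandC : ∀ (x d : Fin n → ℝ) (t : ℝ), c (x + t • d)
      = (d ⬝ᵥ C.mulVec d) * t ^ 2 + (2 * (d ⬝ᵥ (C.mulVec x + h))) * t + c x := by
    intro x d t
    rw [hc (x + t • d), hc x]
    exact expandP' C hC h γc x d t
  have expandQ : ∀ (x d : Fin n → ℝ) (t : ℝ), q (x + t • d)
      = (d ⬝ᵥ Q.mulVec d) * t ^ 2 + (2 * (d ⬝ᵥ (Q.mulVec x + g))) * t + q x := by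
    intro x d t
    rw [hq (x + t • d), hq x]
    exact expandP' Q hQ g γq x d t
  constructor
  · rintro ⟨hcx, hmin⟩
    refine ⟨hcx, ?_⟩
    -- Step 1: the pairwise inequality, first assuming the direction is `C`-nondegenerate.
    have keyA : ∀ x y : Fin n → ℝ, c x < 0 → 0 < c y →
        (y - x) ⬝ᵥ C.mulVec (y - x) ≠ 0 →
        0 ≤ (q x - q xstar) * c y - (q y - q xstar) * c x := by
      intro x y hx hy hA
      set d : Fin n → ℝ := y - x with hd
      have hyd : x + (1 : ℝ) • d = y := by simp [hd]
      have hcy : c y = (d ⬝ᵥ C.mulVec d) + (2 * (d ⬝ᵥ (C.mulVec x + h))) + c x := by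
        rw [← hyd, expandC x d 1]; ring
      have hqy : q y = (d ⬝ᵥ Q.mulVec d) + (2 * (d ⬝ᵥ (Q.mulVec x + g))) + q x := by
        rw [← hyd, expandQ x d 1]; ring
      have hsum : 0 < (d ⬝ᵥ C.mulVec d) + (2 * (d ⬝ᵥ (C.mulVec x + h))) + c x := by
        rw [← hcy]; exact hy
      have hroots : ∀ r : ℝ,
          (d ⬝ᵥ C.mulVec d) * r ^ 2 + (2 * (d ⬝ᵥ (C.mulVec x + h))) * r + c x = 0 →
          0 ≤ (d ⬝ᵥ Q.mulVec d) * r ^ 2 + (2 * (d ⬝ᵥ (Q.mulVec x + g))) * r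
            + (q x - q xstar) := by
        intro r hr
        have hcz : c (x + r • d) = 0 := by rw [expandC x d r]; exact hr
        have hqz := hmin _ hcz
        rw [expandQ x d r] at hqz
        linarith
      have hres := quad_root_lemma' (d ⬝ᵥ C.mulVec d) (2 * (d ⬝ᵥ (C.mulVec x + h))) (c x)
        (d ⬝ᵥ Q.mulVec d) (2 * (d ⬝ᵥ (Q.mulVec x + g))) (q x - q xstar) hA hx hsum hroots
      have e1 : (d ⬝ᵥ C.mulVec d) + (2 * (d ⬝ᵥ (C.mulVec x + h))) + c x = c y := hcy.symm
      have e2 : (d ⬝ᵥ Q.mulVec d) + (2 * (d ⬝ᵥ (Q.mulVec x + g))) + (q x - q xstar)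
          = q y - q xstar := by rw [hqy]; ring
      rw [e1, e2] at hres
      linarith
    -- Step 2: the pairwise inequality in general, by perturbation.
    have key : ∀ x y : Fin n → ℝ, c x < 0 → 0 < c y →
        0 ≤ (q x - q xstar) * c y - (q y - q xstar) * c x := by
      intro x y hx hy
      rcases ne_or_eq ((y - x) ⬝ᵥ C.mulVec (y - x)) 0 with hA | hA0
      · exact keyA x y hx hy hA
      obtain ⟨w, hw⟩ := exists_quadform_ne_zero' C hC hCne
      set d : Fin n → ℝ := y - x with hd
      set P : ℝ → ℝ := fun ε => (q x - q xstar)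
          * ((w ⬝ᵥ C.mulVec w) * ε ^ 2 + (2 * (w ⬝ᵥ (C.mulVec y + h))) * ε + c y)
        - (((w ⬝ᵥ Q.mulVec w) * ε ^ 2 + (2 * (w ⬝ᵥ (Q.mulVec y + g))) * ε + q y) - q xstar)
          * c x with hP
      have hPval : ∀ ε : ℝ, P ε
          = (q x - q xstar) * c (y + ε • w) - (q (y + ε • w) - q xstar) * c x := by
        intro ε
        rw [hP]
        simp only
        rw [expandC y w ε, expandQ y w ε]
      have hPcont : Continuous P := by
        rw [hP]; fun_prop
      have hres : 0 ≤ P 0 := by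
        apply cont_nonneg_of_approx' P hPcont
        intro δ hδ
        -- positivity neighborhood for c (y + ε • w)
        have hcont2 : Continuous fun ε : ℝ =>
            (w ⬝ᵥ C.mulVec w) * ε ^ 2 + (2 * (w ⬝ᵥ (C.mulVec y + h))) * ε + c y := by
          fun_prop
        have hopen2 : IsOpen {ε : ℝ | 0 < (w ⬝ᵥ C.mulVec w) * ε ^ 2
            + (2 * (w ⬝ᵥ (C.mulVec y + h))) * ε + c y} := isOpen_lt continuous_const hcont2
        have h0mem : (0 : ℝ) ∈ {ε : ℝ | 0 < (w ⬝ᵥ C.mulVec w) * ε ^ 2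
            + (2 * (w ⬝ᵥ (C.mulVec y + h))) * ε + c y} := by
          simpa using hy
        obtain ⟨δ₂, hδ₂pos, hball⟩ := Metric.isOpen_iff.mp hopen2 0 h0mem
        set ε₀ : ℝ := min δ δ₂ / 2 with hε₀
        have hε₀pos : 0 < ε₀ := by positivity
        have hε₀δ : ε₀ < δ := by
          have : min δ δ₂ ≤ δ := min_le_left _ _
          simp only [hε₀]; linarith
        have hε₀δ₂ : ε₀ < δ₂ := by
          have : min δ δ₂ ≤ δ₂ := min_le_right _ _
          simp only [hε₀]; linarith
        -- choose ε among ε₀ and ε₀/2 with W * ε + 2 * D ≠ 0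
        have hchoice : ∃ ε : ℝ, 0 < ε ∧ ε < δ ∧ ε < δ₂ ∧
            (w ⬝ᵥ C.mulVec w) * ε + 2 * (w ⬝ᵥ C.mulVec d) ≠ 0 := by
          by_cases hbad : (w ⬝ᵥ C.mulVec w) * ε₀ + 2 * (w ⬝ᵥ C.mulVec d) = 0
          · refine ⟨ε₀ / 2, by positivity, by linarith, by linarith, ?_⟩
            intro hbad2
            have hz : (w ⬝ᵥ C.mulVec w) * (ε₀ / 2) = 0 := by linarith
            have : ε₀ / 2 = 0 := by
              rcases mul_eq_zero.mp hz with hh | hh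
              · exact absurd hh hw
              · exact hh
            linarith
          · exact ⟨ε₀, hε₀pos, hε₀δ, hε₀δ₂, hbad⟩
        obtain ⟨ε, hεpos, hεδ, hεδ₂, hεne⟩ := hchoice
        refine ⟨ε, hεpos, hεδ, ?_⟩
        -- c (y + ε • w) > 0
        have hcyε : 0 < c (y + ε • w) := by
          have hmem : ε ∈ Metric.ball (0 : ℝ) δ₂ := by
            simp [Real.dist_eq, abs_of_pos hεpos]; linarith
          have := hball hmem
          rw [expandC y w ε]
          exact this
        -- nondegeneracy of the new direction
        have hdirne : (y + ε • w - x) ⬝ᵥ C.mulVec (y + ε • w - x) ≠ 0 := by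
          have hrw : y + ε • w - x = d + ε • w := by
            rw [hd]; abel
          rw [hrw]
          have hexp := expandP' C hC 0 0 d w ε
          simp only [zero_dotProduct, dotProduct_zero, mul_zero, zero_mul, add_zero] at hexp
          rw [hexp, hA0, add_zero]
          have hfact : (w ⬝ᵥ C.mulVec w) * ε ^ 2 + 2 * (w ⬝ᵥ C.mulVec d) * ε
              = ε * ((w ⬝ᵥ C.mulVec w) * ε + 2 * (w ⬝ᵥ C.mulVec d)) := by ring
          rw [hfact]
          exact mul_ne_zero (ne_of_gt hεpos) hεne
        have := keyA x (y + ε • w) hx hcyε hdirne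
        rw [hPval ε]
        exact this
      have hP0 : P 0 = (q x - q xstar) * c y - (q y - q xstar) * c x := by
        rw [hPval 0]
        simp
      rw [hP0] at hres
      exact hres
    -- Step 3: build the multiplier as an infimum.
    obtain ⟨x₀, hx₀⟩ := hneg
    obtain ⟨y₀, hy₀⟩ := hpos
    set T : Set ℝ := (fun z => (q z - q xstar) / (-c z)) '' {z | c z < 0} with hT
    have hTne : T.Nonempty := ⟨_, ⟨x₀, hx₀, rfl⟩⟩
    have hbdd_aux : ∀ y : Fin n → ℝ, 0 < c y → ∀ t ∈ T, -(q y - q xstar) / c y ≤ t := by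
      rintro y hy t ⟨z, hz, rfl⟩
      have hzlt : c z < 0 := hz
      have hz' : (0 : ℝ) < -c z := by linarith [hzlt]
      rw [div_le_div_iff₀ hy hz']
      have := key z y hz hy
      nlinarith [this]
    have hbdd : BddBelow T := ⟨-(q y₀ - q xstar) / c y₀, fun t ht => hbdd_aux y₀ hy₀ t ht⟩
    set lam : ℝ := sInf T with hlam
    have hglob : ∀ z : Fin n → ℝ, 0 ≤ (q z - q xstar) + lam * c z := by
      intro z
      rcases lt_trichotomy (c z) 0 with hz | hz | hz
      · have hle : lam ≤ (q z - q xstar) / (-c z) := csInf_le hbdd ⟨z, hz, rfl⟩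
        have hz' : (0 : ℝ) < -c z := by linarith
        rw [le_div_iff₀ hz'] at hle
        nlinarith [hle]
      · have := hmin z hz
        rw [hz]
        simp
        linarith
      · have hge : -(q z - q xstar) / c z ≤ lam := le_csInf hTne (hbdd_aux z hz)
        rw [div_le_iff₀ hz] at hge
        nlinarith [hge]
    -- Step 4: extract stationarity and positive semidefiniteness.
    have hdir : ∀ dv : Fin n → ℝ,
        (2 * (dv ⬝ᵥ (Q.mulVec xstar + g)) + lam * (2 * (dv ⬝ᵥ (C.mulVec xstar + h))) = 0)
        ∧ 0 ≤ dv ⬝ᵥ Q.mulVec dv + lam * (dv ⬝ᵥ C.mulVec dv) := by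
      intro dv
      have hyp : ∀ t : ℝ, 0 ≤ (dv ⬝ᵥ Q.mulVec dv + lam * (dv ⬝ᵥ C.mulVec dv)) * t ^ 2
          + (2 * (dv ⬝ᵥ (Q.mulVec xstar + g)) + lam * (2 * (dv ⬝ᵥ (C.mulVec xstar + h)))) * t := by
        intro t
        have h1 := hglob (xstar + t • dv)
        rw [expandQ xstar dv t, expandC xstar dv t, hcx] at h1
        ring_nf at h1 ⊢
        linarith only [h1]
      obtain ⟨hB, hA⟩ := quad_nonneg_coeffs' _ _ hyp
      exact ⟨hB, hA⟩
    refine ⟨lam, ?_, posSemidef_iff_dotProduct_mulVec.mpr ⟨?_, ?_⟩⟩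
    · funext i
      have hB := (hdir (Pi.single i 1)).1
      rw [single_dotProduct, single_dotProduct] at hB
      simp only [one_mul, Pi.add_apply] at hB
      simp only [Pi.add_apply, Pi.smul_apply, Pi.zero_apply, smul_eq_mul]
      linarith
    · rw [Matrix.IsHermitian, conjTranspose_eq_transpose_of_trivial, transpose_add,
        transpose_smul, hQ, hC]
    · intro v
      have hA := (hdir v).2
      have hstar : star v = v := by simp
      rw [hstar, add_mulVec, smul_mulVec, dotProduct_add, dotProduct_smul,
        smul_eq_mul]
      exact hA
  · rintro ⟨hcx, lam, hstat, hpsd⟩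
    refine ⟨hcx, fun x hx => ?_⟩
    set u : Fin n → ℝ := x - xstar with hu
    have hxu : xstar + (1 : ℝ) • u = x := by simp [hu]
    have hq1 : q x = (u ⬝ᵥ Q.mulVec u) + (2 * (u ⬝ᵥ (Q.mulVec xstar + g))) + q xstar := by
      conv_lhs => rw [← hxu]
      rw [expandQ xstar u 1]; ring
    have hc1 : c x = (u ⬝ᵥ C.mulVec u) + (2 * (u ⬝ᵥ (C.mulVec xstar + h))) + c xstar := by
      conv_lhs => rw [← hxu]
      rw [expandC xstar u 1]; ring
    rw [hx, hcx] at hc1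
    have hpsdu := (posSemidef_iff_dotProduct_mulVec.mp hpsd).2 u
    have hstar : star u = u := by simp
    rw [hstar, add_mulVec, smul_mulVec, dotProduct_add, dotProduct_smul,
      smul_eq_mul] at hpsdu
    have hstatu : u ⬝ᵥ (Q.mulVec xstar + g + lam • (C.mulVec xstar + h)) = 0 := by
      rw [hstat]; simp
    rw [dotProduct_add, dotProduct_smul, smul_eq_mul] at hstatu
    have hlamc : lam * ((u ⬝ᵥ C.mulVec u) + 2 * (u ⬝ᵥ (C.mulVec xstar + h))) = 0 := by
      have : (u ⬝ᵥ C.mulVec u) + 2 * (u ⬝ᵥ (C.mulVec xstar + h)) = 0 := by linarith [hc1]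
      rw [this, mul_zero]
    nlinarith [hpsdu, hstatu, hq1, hlamc]
end
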